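/- 3DVar long-time accuracy with model error: suppose the truth evolves as v†_{j+1} = Ψ(v†_j) with linear observations y†_{j+1} = Hv†_{j+1} + η†_{j+1}, and 3DVar updates m_{j+1} = (I−KH)Ψᵃ(m_j) + Ky†_{j+1} with approximate model Ψᵃ. If sup_v |(I−KH)DΨ(v)| ≤ λ < 1, sup_v |(I−KH)(Ψ(v)−Ψᵃ(v))| = δ, and ε = E|Kη_j|, then limsup_{j→∞} E|m_j − v†_j| ≤ (ε + δ)/(1 − λ). -/
import Mathlib


open MeasureTheory Filter

/-- 3DVar long-time accuracy with model error: the truth evolves as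
`v†_{j+1} = Ψ(v†_j)` with linear observations `y†_{j+1} = H v†_{j+1} + η†_{j+1}`,
and 3DVar with approximate model Ψᵃ and gain K updates
`m_{j+1} = (I−KH)Ψᵃ(m_j) + K y†_{j+1}`. If
`sup_v ‖(I−KH)DΨ(v)‖ ≤ λ < 1`, `sup_v ‖(I−KH)(Ψ(v)−Ψᵃ(v))‖ ≤ δ` and
`ε = E‖Kη_j‖`, then `limsup_{j→∞} E‖m_j − v†_j‖ ≤ (ε + δ)/(1 − λ)`. -/
theorem threeDVar_model_error_accuracy {dim k : ℕ}
    {Ω : Type*} [MeasurableSpace Ω] (P : Measure Ω) [IsProbabilityMeasure P]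
    (Ψ Ψa : EuclideanSpace ℝ (Fin dim) → EuclideanSpace ℝ (Fin dim))
    (H : EuclideanSpace ℝ (Fin dim) →L[ℝ] EuclideanSpace ℝ (Fin k))
    (K : EuclideanSpace ℝ (Fin k) →L[ℝ] EuclideanSpace ℝ (Fin dim))
    (lam δ ε : ℝ)
    (hΨ : Differentiable ℝ Ψ)
    (hlam0 : 0 < lam) (hlam1 : lam < 1)
    (hcontr : ∀ v : EuclideanSpace ℝ (Fin dim),
      ‖((ContinuousLinearMap.id ℝ (EuclideanSpace ℝ (Fin dim))) - K.comp H).comp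
          (fderiv ℝ Ψ v)‖ ≤ lam)
    (hmodelerr : ∀ v : EuclideanSpace ℝ (Fin dim),
      ‖(Ψ v - Ψa v) - K (H (Ψ v - Ψa v))‖ ≤ δ)
    (vd : ℕ → EuclideanSpace ℝ (Fin dim))
    (hv : ∀ j, vd (j + 1) = Ψ (vd j))
    (η : ℕ → Ω → EuclideanSpace ℝ (Fin k))
    (hηi : ∀ j, Integrable (fun ω => ‖K (η j ω)‖) P)
    (hε : ∀ j, (∫ ω, ‖K (η j ω)‖ ∂P) = ε)
    (m : ℕ → Ω → EuclideanSpace ℝ (Fin dim))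
    (hm : ∀ j ω, m (j + 1) ω =
      (Ψa (m j ω) - K (H (Ψa (m j ω)))) + K (H (vd (j + 1)) + η (j + 1) ω))
    (hmi : ∀ j, Integrable (fun ω => ‖m j ω - vd j‖) P) :
    Filter.limsup (fun j => ∫ ω, ‖m j ω - vd j‖ ∂P) Filter.atTop ≤
      (ε + δ) / (1 - lam) := by
  classical
  have h1lam : 0 < 1 - lam := by linarith
  -- Lipschitz estimate for (I - KH) ∘ Ψ via mean value theorem
  have hlip : ∀ x y : EuclideanSpace ℝ (Fin dim),
      ‖(Ψ x - K (H (Ψ x))) - (Ψ y - K (H (Ψ y)))‖ ≤ lam * ‖x - y‖ := by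
    intro x y
    set T : EuclideanSpace ℝ (Fin dim) →L[ℝ] EuclideanSpace ℝ (Fin dim) :=
      (ContinuousLinearMap.id ℝ (EuclideanSpace ℝ (Fin dim))) - K.comp H with hT
    have hderiv : ∀ z ∈ (Set.univ : Set (EuclideanSpace ℝ (Fin dim))),
        HasFDerivWithinAt (fun w => T (Ψ w)) (T.comp (fderiv ℝ Ψ z)) Set.univ z := by
      intro z _
      exact (T.hasFDerivAt.comp z (hΨ z).hasFDerivAt).hasFDerivWithinAt
    have := Convex.norm_image_sub_le_of_norm_hasFDerivWithin_le
      hderiv (fun z _ => hcontr z) convex_univ (Set.mem_univ y) (Set.mem_univ x)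
    simpa [hT, ContinuousLinearMap.sub_apply, ContinuousLinearMap.comp_apply] using this
  set a : ℕ → ℝ := fun j => ∫ ω, ‖m j ω - vd j‖ ∂P with ha
  have hδ0 : 0 ≤ δ := le_trans (norm_nonneg _) (hmodelerr 0)
  have hε0 : 0 ≤ ε := by
    rw [← hε 0]; exact integral_nonneg fun ω => norm_nonneg _
  have ha0 : ∀ j, 0 ≤ a j := fun j => integral_nonneg fun ω => norm_nonneg _
  have key : ∀ j, a (j + 1) ≤ lam * a j + (ε + δ) := by
    intro j
    have hpt : ∀ ω, ‖m (j + 1) ω - vd (j + 1)‖ ≤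
        lam * ‖m j ω - vd j‖ + δ + ‖K (η (j + 1) ω)‖ := by
      intro ω
      have hid : m (j + 1) ω - vd (j + 1) =
          ((Ψ (m j ω) - K (H (Ψ (m j ω)))) - (Ψ (vd j) - K (H (Ψ (vd j)))))
          - ((Ψ (m j ω) - Ψa (m j ω)) - K (H (Ψ (m j ω) - Ψa (m j ω))))
          + K (η (j + 1) ω) := by
        rw [hm j ω, hv j]
        simp only [map_add, map_sub]
        abel
      calc ‖m (j + 1) ω - vd (j + 1)‖ ≤
            ‖(Ψ (m j ω) - K (H (Ψ (m j ω)))) - (Ψ (vd j) - K (H (Ψ (vd j))))‖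
            + ‖(Ψ (m j ω) - Ψa (m j ω)) - K (H (Ψ (m j ω) - Ψa (m j ω)))‖
            + ‖K (η (j + 1) ω)‖ := by
              rw [hid]
              exact le_trans (norm_add_le _ _) (by gcongr; exact norm_sub_le _ _)
        _ ≤ lam * ‖m j ω - vd j‖ + δ + ‖K (η (j + 1) ω)‖ := by
              gcongr
              exacts [hlip _ _, hmodelerr _]
    have hint : Integrable (fun ω => lam * ‖m j ω - vd j‖ + δ + ‖K (η (j + 1) ω)‖) P :=
      (((hmi j).const_mul lam).add (integrable_const δ)).add (hηi (j + 1))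
    have hmono := integral_mono (hmi (j + 1)) hint hpt
    have e1 : ∫ ω, (lam * ‖m j ω - vd j‖ + δ + ‖K (η (j + 1) ω)‖) ∂P
        = (∫ ω, (lam * ‖m j ω - vd j‖ + δ) ∂P) + ∫ ω, ‖K (η (j + 1) ω)‖ ∂P :=
      integral_add (((hmi j).const_mul lam).add (integrable_const δ)) (hηi (j + 1))
    have e2 : ∫ ω, (lam * ‖m j ω - vd j‖ + δ) ∂P
        = (∫ ω, lam * ‖m j ω - vd j‖ ∂P) + ∫ (_ : Ω), δ ∂P :=
      integral_add ((hmi j).const_mul lam) (integrable_const δ)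
    have e3 : ∫ ω, lam * ‖m j ω - vd j‖ ∂P = lam * a j := MeasureTheory.integral_const_mul lam _
    have e4 : ∫ (_ : Ω), δ ∂P = δ := by simp
    have e5 := hε (j + 1)
    rw [e1, e2, e3, e4, e5] at hmono
    have : a (j + 1) ≤ lam * a j + δ + ε := hmono
    linarith
  set Lc : ℝ := (ε + δ) / (1 - lam) with hLc
  have hLc0 : 0 ≤ Lc := div_nonneg (by linarith) h1lam.le
  have hLfix : lam * Lc + (ε + δ) = Lc := by
    rw [hLc]; field_simp; ring
  have hbound : ∀ j, a j ≤ lam ^ j * a 0 + Lc := by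
    intro j
    induction j with
    | zero => simpa using hLc0
    | succ n ih =>
      calc a (n + 1) ≤ lam * a n + (ε + δ) := key n
        _ ≤ lam * (lam ^ n * a 0 + Lc) + (ε + δ) := by gcongr
        _ = lam ^ (n + 1) * a 0 + (lam * Lc + (ε + δ)) := by ring
        _ = lam ^ (n + 1) * a 0 + Lc := by rw [hLfix]
  have htend : Tendsto (fun j => lam ^ j * a 0 + Lc) atTop (nhds Lc) := by
    have := ((tendsto_pow_atTop_nhds_zero_of_lt_one hlam0.le hlam1).mul_const (a 0)).add_const Lc
    simpa using this
  have h1 : Filter.limsup a atTop ≤ Filter.limsup (fun j => lam ^ j * a 0 + Lc) atTop := by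
    exact Filter.limsup_le_limsup (Filter.Eventually.of_forall hbound)
      (Filter.isCoboundedUnder_le_of_le atTop ha0) htend.isBoundedUnder_le
  rwa [htend.limsup_eq] at h1
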